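/- Let α, β, τ_R, a be nonzero reals, set c = -4τ_Rα/(5(α²+4β²)), b = 0, λ = 2τ_R²α(8α²+25β²)/(25(α²+4β²)²), ε = -124a²τ_R²α²β/(25(α²+4β²)²), γ = 8a²τ_R²α(15β²-4α²)/(25(α²+4β²)²), δ = a⁴τ_R²α²(9α²+32β²)/(25β(α²+4β²)²). Suppose ρ : ℝ → ℝ is twice differentiable and satisfies ρ' = c(a-ρ)²(-ρ). Then ρ satisfies ρ'' + ((αε-2βγ)/(τ_Rβ) - 4ατ_R/(α²+4β²)·ρ²)·ρ' + (δ/β - α²(αε-2βγ)²/(16τ_R²β⁴))·ρ + (2αγ+4βε)/(α²+4β²)·ρ³ + (2λ/α - 4τ_R²β²/(α²+4β²)²)·ρ⁵ = 0. -/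

import Mathlib

theorem stmt_9 (α β τ a c b lam eps gam del : ℝ)
    (hα : α ≠ 0) (hβ : β ≠ 0) (hτ : τ ≠ 0) (ha : a ≠ 0)
    (hc : c = -(4 * τ * α) / (5 * (α ^ 2 + 4 * β ^ 2)))
    (hb : b = 0)
    (hlam : lam = 2 * τ ^ 2 * α * (8 * α ^ 2 + 25 * β ^ 2) / (25 * (α ^ 2 + 4 * β ^ 2) ^ 2))
    (heps : eps = -(124 * a ^ 2 * τ ^ 2 * α ^ 2 * β) / (25 * (α ^ 2 + 4 * β ^ 2) ^ 2))
    (hgam : gam = 8 * a ^ 2 * τ ^ 2 * α * (15 * β ^ 2 - 4 * α ^ 2) / (25 * (α ^ 2 + 4 * β ^ 2) ^ 2))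
    (hdel : del = a ^ 4 * τ ^ 2 * α ^ 2 * (9 * α ^ 2 + 32 * β ^ 2) / (25 * β * (α ^ 2 + 4 * β ^ 2) ^ 2))
    (ρ : ℝ → ℝ) (h1 : Differentiable ℝ ρ) (h2 : Differentiable ℝ (deriv ρ))
    (hode : ∀ ξ, deriv ρ ξ = c * (a - ρ ξ) ^ 2 * (-ρ ξ)) :
    ∀ ξ, deriv (deriv ρ) ξ
      + ((α * eps - 2 * β * gam) / (τ * β) - 4 * α * τ / (α ^ 2 + 4 * β ^ 2) * (ρ ξ) ^ 2) * deriv ρ ξ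
      + (del / β - α ^ 2 * (α * eps - 2 * β * gam) ^ 2 / (16 * τ ^ 2 * β ^ 4)) * ρ ξ
      + (2 * α * gam + 4 * β * eps) / (α ^ 2 + 4 * β ^ 2) * (ρ ξ) ^ 3
      + (2 * lam / α - 4 * τ ^ 2 * β ^ 2 / (α ^ 2 + 4 * β ^ 2) ^ 2) * (ρ ξ) ^ 5 = 0 := by
  intro ξ
  have hd : deriv ρ = fun x => c * (a - ρ x) ^ 2 * (-ρ x) := funext hode
  have hρ : HasDerivAt ρ (deriv ρ ξ) ξ := (h1 ξ).hasDerivAt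
  set r := ρ ξ with hr
  set d := deriv ρ ξ with hdd
  have hD : HasDerivAt (fun x => c * (a - ρ x) ^ 2 * (-ρ x))
      (c * (2 * (a - r) * (0 - d)) * (-r) + c * (a - r) ^ 2 * (-d)) ξ := by
    exact (((((hasDerivAt_const ξ a).sub hρ).pow 2).const_mul c).mul hρ.neg).congr_deriv (by norm_num; rfl)
  have h2d : deriv (deriv ρ) ξ = c * (2 * (a - r) * (0 - d)) * (-r) + c * (a - r) ^ 2 * (-d) := by
    rw [hd]; exact hD.deriv
  have hden : α ^ 2 + 4 * β ^ 2 ≠ 0 := by positivity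
  rw [h2d]
  have hdval : d = c * (a - r) ^ 2 * (-r) := hode ξ
  rw [hdval]
  subst hc hlam heps hgam hdel
  field_simp
  ring
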